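/- arXiv:2205.13870 — 6 statements merged into one kernel-verified Lean document; each statement's English description precedes it below -/
import Mathlib

section
/- Let C be an asymmetric configuration with |C| ≥ 3 whose smallest enclosing rectangle R = ABCD has shorter side |AB| = n ≥ 2 and |AD| = m ≥ n, and whose unique lexicographically largest associated string is λ_AB. Let T be the tail of C (which necessarily lies on the far shorter side CD), let u be the unit vector perpendicular to AB pointing from side AB toward side CD, and set C_new = (C \ {T}) ∪ {T + u}. Then the smallest enclosing rectangle of C_new is the (m+1) × n rectangle obtained from R by moving side CD one unit in the direction u, this rectangle is non-square, and the string of C_new read from corner A in the direction of AB is the unique lexicographically largest associated string of C_new; in particular C_new is asymmetric and its leading corner is again A. -/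
/-! Robots occupy distinct points of the integer grid `ℤ²`; a configuration is a
nonempty finite set `C : Finset (ℤ × ℤ)`.  Throughout, the smallest enclosing
rectangle is translated so that its corners are `A = (0,0)`, `B = (n-1,0)`,
`C = (n-1,m-1)`, `D = (0,m-1)`, where `n` is the number of grid points on side
`AB` and `m` the number of grid points on side `AD`. -/

/-- Occupancy scan of a rectangle: `M` successive grid lines, each holding `N`
grid points; `f i j` is the grid point on the `i`-th line at position `j`;
record `true` at occupied and `false` at unoccupied grid points. -/
def scanStr (C : Finset (ℤ × ℤ)) (M N : ℕ) (f : ℕ → ℕ → ℤ × ℤ) : List Bool :=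
  (List.range M).flatMap (fun i => (List.range N).map (fun j => decide (f i j ∈ C)))

/-- `λ_AB`: rows `y = 0, …, m-1`, each scanned with `x` ascending. -/
def lamAB (C : Finset (ℤ × ℤ)) (n m : ℕ) : List Bool :=
  scanStr C m n (fun y x => ((x : ℤ), (y : ℤ)))

/-- `λ_BA`: rows `y = 0, …, m-1`, each scanned with `x` descending. -/
def lamBA (C : Finset (ℤ × ℤ)) (n m : ℕ) : List Bool :=
  scanStr C m n (fun y x => ((n : ℤ) - 1 - x, (y : ℤ)))

/-- `λ_CD`: rows `y = m-1, …, 0`, each scanned with `x` descending. -/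
def lamCD (C : Finset (ℤ × ℤ)) (n m : ℕ) : List Bool :=
  scanStr C m n (fun y x => ((n : ℤ) - 1 - x, (m : ℤ) - 1 - y))

/-- `λ_DC`: rows `y = m-1, …, 0`, each scanned with `x` ascending. -/
def lamDC (C : Finset (ℤ × ℤ)) (n m : ℕ) : List Bool :=
  scanStr C m n (fun y x => ((x : ℤ), (m : ℤ) - 1 - y))

/-- `λ_BC`: columns `x = n-1, …, 0`, each scanned with `y` ascending. -/
def lamBC (C : Finset (ℤ × ℤ)) (n m : ℕ) : List Bool :=
  scanStr C n m (fun x y => ((n : ℤ) - 1 - x, (y : ℤ)))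

/-- `λ_CB`: columns `x = n-1, …, 0`, each scanned with `y` descending. -/
def lamCB (C : Finset (ℤ × ℤ)) (n m : ℕ) : List Bool :=
  scanStr C n m (fun x y => ((n : ℤ) - 1 - x, (m : ℤ) - 1 - y))

/-- `λ_AD`: columns `x = 0, …, n-1`, each scanned with `y` ascending. -/
def lamAD (C : Finset (ℤ × ℤ)) (n m : ℕ) : List Bool :=
  scanStr C n m (fun x y => ((x : ℤ), (y : ℤ)))

/-- `λ_DA`: columns `x = 0, …, n-1`, each scanned with `y` descending. -/
def lamDA (C : Finset (ℤ × ℤ)) (n m : ℕ) : List Bool :=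
  scanStr C n m (fun x y => ((x : ℤ), (m : ℤ) - 1 - y))

/-- Strict lexicographic comparison of binary strings. -/
def lexLt (a b : List Bool) : Prop := List.Lex (· < ·) a b

/-- The smallest enclosing rectangle of `C` is `[0, n-1] × [0, m-1]`
(`n` grid points wide, `m` grid points high). -/
def isSER (C : Finset (ℤ × ℤ)) (n m : ℕ) : Prop :=
  (∀ p ∈ C, 0 ≤ p.1 ∧ p.1 ≤ (n : ℤ) - 1 ∧ 0 ≤ p.2 ∧ p.2 ≤ (m : ℤ) - 1) ∧
  (∃ p ∈ C, p.1 = 0) ∧ (∃ p ∈ C, p.1 = (n : ℤ) - 1) ∧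
  (∃ p ∈ C, p.2 = 0) ∧ (∃ p ∈ C, p.2 = (m : ℤ) - 1)

/-- The order in which grid points are visited by the scan `λ_AB`:
`p` comes strictly before `q`. -/
def scanLt (p q : ℤ × ℤ) : Prop := p.2 < q.2 ∨ (p.2 = q.2 ∧ p.1 < q.1)

/-- `h` is the head of `C`: the robot at the position of the first `1` of `λ_AB`. -/
def isHead (C : Finset (ℤ × ℤ)) (h : ℤ × ℤ) : Prop :=
  h ∈ C ∧ ∀ p ∈ C, p ≠ h → scanLt h p

/-- `t` is the tail of `C`: the robot at the position of the last `1` of `λ_AB`. -/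
def isTail (C : Finset (ℤ × ℤ)) (t : ℤ × ℤ) : Prop :=
  t ∈ C ∧ ∀ p ∈ C, p ≠ t → scanLt p t

/-- The four associated strings of a non-square configuration. -/
def strings4 (C : Finset (ℤ × ℤ)) (n m : ℕ) : List (List Bool) :=
  [lamAB C n m, lamBA C n m, lamCD C n m, lamDC C n m]

/-- The eight associated strings of a configuration whose rectangle is a square. -/
def strings8 (C : Finset (ℤ × ℤ)) (n m : ℕ) : List (List Bool) :=
  [lamAB C n m, lamBA C n m, lamCD C n m, lamDC C n m,
   lamBC C n m, lamCB C n m, lamAD C n m, lamDA C n m]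

/-- The associated strings of `C`: eight of them if the rectangle is a square,
four otherwise. -/
def assocStrings (C : Finset (ℤ × ℤ)) (n m : ℕ) : List (List Bool) :=
  if n = m then strings8 C n m else strings4 C n m

/-- The `i`-th member of the list `L` of associated strings is the unique
lexicographically largest one: every other member (by position) is strictly
smaller. -/
def uniqueMaxAt (L : List (List Bool)) (i : ℕ) : Prop :=
  i < L.length ∧ ∀ j < L.length, j ≠ i → lexLt (L.getD j []) (L.getD i [])

/-- `C` is asymmetric: among its associated strings there is a unique
lexicographically largest one. -/
def asymmetricCfg (C : Finset (ℤ × ℤ)) (n m : ℕ) : Prop :=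
  ∃ i, uniqueMaxAt (assocStrings C n m) i

/-- `λ_AB` is the unique lexicographically largest associated string of `C`
(so `C` is asymmetric with leading corner `A`). -/
def leadingABCfg (C : Finset (ℤ × ℤ)) (n m : ℕ) : Prop :=
  uniqueMaxAt (assocStrings C n m) 0



section Generic
variable {α : Type*} {r : α → α → Prop}

theorem my_lex_append_right (a : List α) {u v : List α} (h : List.Lex r u v) :
    List.Lex r (a ++ u) (a ++ v) := by
  induction a with
  | nil => exact h
  | cons x a ih => exact List.Lex.cons ih

theorem my_lex_append_left : ∀ {s t : List α}, List.Lex r s t → s.length = t.length →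
    ∀ (u v : List α), List.Lex r (s ++ u) (t ++ v) := by
  intro s
  induction s with
  | nil => intro t h hl u v; cases t with
    | nil => exact absurd h (by intro h; cases h)
    | cons y t => simp at hl
  | cons x s ih =>
    intro t h hl u v
    cases t with
    | nil => simp at hl
    | cons y t =>
      cases h with
      | rel h => exact List.Lex.rel h
      | cons h => exact List.Lex.cons (ih h (by simpa using hl) u v)

theorem my_lex_append_split : ∀ {s t : List α} (u v : List α), s.length = t.length →
    List.Lex r (s ++ u) (t ++ v) → List.Lex r s t ∨ (s = t ∧ List.Lex r u v) := by
  intro s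
  induction s with
  | nil => intro t u v hl h; cases t with
    | nil => exact Or.inr ⟨rfl, h⟩
    | cons y t => simp at hl
  | cons x s ih =>
    intro t u v hl h
    cases t with
    | nil => simp at hl
    | cons y t =>
      cases h with
      | rel h => exact Or.inl (List.Lex.rel h)
      | cons h =>
        rcases ih u v (by simpa using hl) h with h' | ⟨rfl, h'⟩
        · exact Or.inl (List.Lex.cons h')
        · exact Or.inr ⟨rfl, h'⟩

theorem my_lex_trans (htr : ∀ a b c, r a b → r b c → r a c) :
    ∀ {a b c : List α}, List.Lex r a b → List.Lex r b c → List.Lex r a c := by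
  intro a b c h1
  induction h1 generalizing c with
  | nil =>
    intro h2
    cases h2 with
    | rel h => exact List.Lex.nil
    | cons h => exact List.Lex.nil
  | @rel x l1 y l2 h =>
    intro h2
    cases h2 with
    | rel h' => exact List.Lex.rel (htr _ _ _ h h')
    | cons h' => exact List.Lex.rel h
  | @cons x l1 l2 h ih =>
    intro h2
    cases h2 with
    | rel h' => exact List.Lex.rel h'
    | cons h' => exact List.Lex.cons (ih h')

theorem my_lex_irrefl (hir : ∀ a, ¬ r a a) : ∀ (l : List α), ¬ List.Lex r l l := by
  intro l
  induction l with
  | nil => intro h; cases h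
  | cons x l ih =>
    intro h
    cases h with
    | rel h => exact hir _ h
    | cons h => exact ih h

theorem my_lex_cons_iff {x y : α} {l1 l2 : List α} :
    List.Lex r (x :: l1) (y :: l2) ↔ r x y ∨ (x = y ∧ List.Lex r l1 l2) := by
  constructor
  · intro h
    cases h with
    | rel h => exact Or.inl h
    | cons h => exact Or.inr ⟨rfl, h⟩
  · rintro (h | ⟨rfl, h⟩)
    exacts [List.Lex.rel h, List.Lex.cons h]

end Generic

theorem lexLt_trans {a b c : List Bool} (h1 : lexLt a b) (h2 : lexLt b c) : lexLt a c :=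
  my_lex_trans (r := (· < ·)) (fun _ _ _ => lt_trans) h1 h2

theorem lexLt_irrefl (l : List Bool) : ¬ lexLt l l :=
  my_lex_irrefl (r := (· < ·)) (fun a => lt_irrefl a) l

theorem lexLt_iff : ∀ {a b : List Bool}, a.length = b.length →
    (lexLt a b ↔ ∃ k, k < b.length ∧ (∀ i < k, a.getD i false = b.getD i false) ∧
      a.getD k false = false ∧ b.getD k false = true) := by
  intro a
  induction a with
  | nil =>
    intro b hl
    cases b with
    | nil =>
      constructor
      · intro h; cases h
      · rintro ⟨k, hk, -⟩; simp at hk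
    | cons y b => simp at hl
  | cons x a ih =>
    intro b hl
    cases b with
    | nil => simp at hl
    | cons y b =>
      constructor
      · intro h
        cases h with
        | rel h =>
          have hx : x = false := by revert h; cases x <;> cases y <;> decide
          have hy : y = true := by revert h; cases x <;> cases y <;> decide
          exact ⟨0, by simp, by simp, by simp [hx], by simp [hy]⟩
        | cons h =>
          obtain ⟨k, hk, hpre, ha, hb⟩ := (ih (by simpa using hl)).mp h
          exact ⟨k + 1, by simpa using hk, by
            intro i hi
            cases i with
            | zero => simp
            | succ i => simpa using hpre i (by omega), by simpa using ha, by simpa using hb⟩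
      · rintro ⟨k, hk, hpre, ha, hb⟩
        cases k with
        | zero =>
          simp at ha hb
          subst ha; subst hb
          exact List.Lex.rel (by decide)
        | succ k =>
          have h0 := hpre 0 (by omega)
          simp at h0
          subst h0
          exact List.Lex.cons ((ih (by simpa using hl)).mpr
            ⟨k, by simpa using hk, fun i hi => by simpa using hpre (i+1) (by omega),
              by simpa using ha, by simpa using hb⟩)

theorem lexLt_trichotomy : ∀ {a b : List Bool}, a.length = b.length →
    lexLt a b ∨ a = b ∨ lexLt b a := by
  intro a
  induction a with
  | nil => intro b hl; cases b with
    | nil => simp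
    | cons y b => simp at hl
  | cons x a ih =>
    intro b hl
    cases b with
    | nil => simp at hl
    | cons y b =>
      rcases Bool.eq_false_or_eq_true x with hx | hx <;>
        rcases Bool.eq_false_or_eq_true y with hy | hy
      · subst hx; subst hy
        rcases ih (by simpa using hl) with h | h | h
        · exact Or.inl (List.Lex.cons h)
        · exact Or.inr (Or.inl (by rw [h]))
        · exact Or.inr (Or.inr (List.Lex.cons h))
      · subst hx; subst hy
        exact Or.inr (Or.inr (List.Lex.rel (by decide)))
      · subst hx; subst hy
        exact Or.inl (List.Lex.rel (by decide))
      · subst hx; subst hy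
        rcases ih (by simpa using hl) with h | h | h
        · exact Or.inl (List.Lex.cons h)
        · exact Or.inr (Or.inl (by rw [h]))
        · exact Or.inr (Or.inr (List.Lex.cons h))

theorem flat_lex : ∀ {ss ts : List (List Bool)} {n : ℕ},
    (∀ b ∈ ss, b.length = n) → (∀ b ∈ ts, b.length = n) → ss.length = ts.length →
    (lexLt ss.flatten ts.flatten ↔ List.Lex lexLt ss ts) := by
  intro ss
  induction ss with
  | nil => intro ts n hs ht hl; cases ts with
    | nil => constructor <;> (intro h; cases h)
    | cons b ts => simp at hl
  | cons a ss ih =>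
    intro ts n hs ht hl
    cases ts with
    | nil => simp at hl
    | cons b ts =>
      simp only [List.flatten_cons]
      have hab : a.length = b.length := by
        rw [hs a (by simp), ht b (by simp)]
      constructor
      · intro h
        rcases my_lex_append_split _ _ hab h with h' | ⟨rfl, h'⟩
        · exact List.Lex.rel h'
        · exact List.Lex.cons ((ih (fun x hx => hs x (by simp [hx]))
            (fun x hx => ht x (by simp [hx])) (by simpa using hl)).mp h')
      · intro h
        cases h with
        | rel h => exact my_lex_append_left h hab _ _
        | cons h => exact my_lex_append_right _ ((ih (fun x hx => hs x (by simp [hx]))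
            (fun x hx => ht x (by simp [hx])) (by simpa using hl)).mpr h)

def zb (n : ℕ) : List Bool := List.replicate n false
def eb (n τ : ℕ) : List Bool := (List.range n).map (fun j => decide (j = τ))

theorem getD_eq_false_of_le {l : List Bool} {i : ℕ} (h : l.length ≤ i) :
    l.getD i false = false := by
  rw [List.getD_eq_default]; exact h

theorem getD_lt {l : List Bool} {i : ℕ} (h : i < l.length) :
    l.getD i false = l[i] := List.getD_eq_getElem l false h

theorem getD_reverse {l : List Bool} {i : ℕ} (h : i < l.length) :
    l.reverse.getD i false = l.getD (l.length - 1 - i) false := by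
  rw [getD_lt (by simpa using h), getD_lt (by omega)]
  simp [List.getElem_reverse]

theorem getD_map_range (f : ℕ → Bool) (n i : ℕ) :
    ((List.range n).map f).getD i false = if i < n then f i else false := by
  by_cases h : i < n
  · rw [getD_lt (by simpa using h)]
    simp [h]
  · rw [getD_eq_false_of_le (by simpa using Nat.le_of_not_lt h)]
    simp [h]

theorem eb_getD (n τ i : ℕ) (h : i < n) : (eb n τ).getD i false = decide (i = τ) := by
  simp [eb, getD_map_range, h]

theorem eb_length (n τ : ℕ) : (eb n τ).length = n := by simp [eb]

theorem zb_getD (n i : ℕ) : (zb n).getD i false = false := by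
  by_cases h : i < n
  · rw [getD_lt (by simpa [zb] using h)]; simp [zb]
  · exact getD_eq_false_of_le (by simpa [zb] using Nat.le_of_not_lt h)

theorem zb_length (n : ℕ) : (zb n).length = n := by simp [zb]

theorem zb_reverse (n : ℕ) : (zb n).reverse = zb n := by simp [zb]

theorem eb_reverse (n τ : ℕ) (h : τ < n) : (eb n τ).reverse = eb n (n - 1 - τ) := by
  apply List.ext_getElem (by simp [eb])
  intro i h1 h2
  simp only [eb, List.getElem_reverse, List.getElem_map, List.getElem_range] at *
  have hi : i < n := by simpa [eb] using h2
  have hl : (List.map (fun j => decide (j = τ)) (List.range n)).length = n := by simp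
  rw [hl]
  exact decide_eq_decide.mpr (by constructor <;> (intro; omega))

theorem lexLt_eb_eb {n τ σ : ℕ} (h1 : τ < σ) (h2 : σ < n) :
    lexLt (eb n σ) (eb n τ) := by
  apply (lexLt_iff (by simp [eb])).mpr
  refine ⟨τ, by simp [eb]; omega, ?_, ?_, ?_⟩
  · intro i hi
    rw [eb_getD n σ i (by omega), eb_getD n τ i (by omega)]
    have : ¬ (i = σ) := by omega
    have : ¬ (i = τ) := by omega
    simp_all
  · rw [eb_getD n σ τ (by omega)]; simp; omega
  · rw [eb_getD n τ τ (by omega)]; simp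

theorem not_lexLt_eb_of_true {n τ : ℕ} {B : List Bool} (hB : B.length = n)
    (hτ : B.getD τ false = true) : ¬ lexLt B (eb n τ) := by
  intro h
  obtain ⟨k, hk, hpre, ha, hb⟩ := (lexLt_iff (by simp [eb, hB])).mp h
  rw [eb_length] at hk
  rw [eb_getD n τ k hk] at hb
  have : k = τ := by simpa using hb
  subst this
  rw [hτ] at ha; exact absurd ha (by simp)

theorem zb_min {n : ℕ} (B : List Bool) (hB : B.length = n) :
    B = zb n ∨ lexLt (zb n) B := by
  subst hB
  induction B with
  | nil => left; rfl
  | cons x B ih =>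
    cases x
    · rcases ih with heq | hlt
      · left; simp [zb, List.replicate_succ]; exact heq
      · right
        simp only [List.length_cons, zb, List.replicate_succ]
        exact List.Lex.cons hlt
    · right
      simp only [List.length_cons, zb, List.replicate_succ]
      exact List.Lex.rel (by decide)

theorem blocksZ (n : ℕ) (M : List (List Bool)) (hM : ∀ b ∈ M, b.length = n) :
    (zb n :: M = M ++ [zb n]) ∨ List.Lex lexLt (zb n :: M) (M ++ [zb n]) := by
  induction M with
  | nil => left; rfl
  | cons B M ih =>
    rcases zb_min B (hM B (by simp)) with rfl | h
    · rcases ih (fun b hb => hM b (by simp [hb])) with heq | hlex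
      · left; rw [List.cons_append, ← heq]
      · right; rw [List.cons_append]; exact List.Lex.cons hlex
    · right; rw [List.cons_append]; exact List.Lex.rel h

theorem lexB_trans {a b c : List (List Bool)} (h1 : List.Lex lexLt a b)
    (h2 : List.Lex lexLt b c) : List.Lex lexLt a c :=
  my_lex_trans (r := lexLt) (fun _ _ _ => lexLt_trans) h1 h2

theorem CORE (n : ℕ) (W M : List (List Bool)) (hM : ∀ b ∈ M, b.length = n)
    (h : List.Lex lexLt W M) : List.Lex lexLt (zb n :: W) (M ++ [zb n]) := by
  have h1 : List.Lex lexLt (zb n :: W) (zb n :: M) := List.Lex.cons h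
  rcases blocksZ n M hM with heq | h2
  · rwa [← heq]
  · exact lexB_trans h1 h2

theorem lex_singleton {a b : List Bool} (h : List.Lex lexLt [a] [b]) : lexLt a b := by
  cases h with
  | rel h => exact h
  | cons h => cases h

theorem BLK1 {n τ : ℕ} (hτ : τ < n) {R S : List Bool} (hR : R.length = n)
    (hS : S.length = n) (hRτ : R.getD τ false = true)
    (hafter : ∀ j, τ < j → R.getD j false = false)
    (hSspec : ∀ j, S.getD j false = (R.getD j false && !(decide (j = τ))))
    (hlex : lexLt R.reverse R) :
    lexLt S.reverse S ∨ ((∀ j, j ≠ τ → R.getD j false = false) ∧ 2 * τ + 1 < n) := by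
  obtain ⟨j0, hj0n, hpre, hrev0, hself⟩ := (lexLt_iff (by simp)).mp hlex
  rw [hR] at hj0n
  have hrevD : ∀ i, i < n → R.reverse.getD i false = R.getD (n - 1 - i) false := by
    intro i hi
    rw [getD_reverse (by omega), hR]
  rw [hrevD j0 hj0n] at hrev0
  have hj0τ : j0 ≤ τ := by
    by_contra hc
    rw [hafter j0 (by omega)] at hself
    exact absurd hself (by simp)
  have hsym : ∀ i, i < j0 → R.getD i false = R.getD (n - 1 - i) false := by
    intro i hi
    have := hpre i hi
    rw [hrevD i (by omega)] at this
    exact this.symm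
  have hlt : j0 < n - 1 - j0 := by
    rcases Nat.lt_trichotomy j0 (n - 1 - j0) with h | h | h
    · exact h
    · rw [← h] at hrev0; rw [hrev0] at hself; exact absurd hself (by simp)
    · have h2 := hsym (n - 1 - j0) h
      have he : n - 1 - (n - 1 - j0) = j0 := by omega
      rw [he] at h2
      rw [hrev0] at h2; rw [← h2] at hself; exact absurd hself (by simp)
  by_cases hcase : j0 = τ
  · right
    constructor
    · intro j hjτ
      rcases Nat.lt_or_ge τ j with h | h
      · exact hafter j h
      · have hj : j < j0 := by omega
        rw [hsym j hj]
        exact hafter (n - 1 - j) (by omega)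
    · omega
  · left
    have hj0τ' : j0 < τ := lt_of_le_of_ne hj0τ hcase
    have hrevDS : ∀ i, i < n → S.reverse.getD i false = S.getD (n - 1 - i) false := by
      intro i hi
      rw [getD_reverse (by omega), hS]
    apply (lexLt_iff (by simp)).mpr
    rw [hS]
    by_cases hc2 : n - 1 - τ < j0
    · refine ⟨n - 1 - τ, by omega, ?_, ?_, ?_⟩
      · intro i hi
        rw [hrevDS i (by omega), hSspec (n - 1 - i), hSspec i]
        have h1 : ¬ (n - 1 - i = τ) := by omega
        have h2 : ¬ (i = τ) := by omega
        simp only [h1, h2, decide_false, Bool.not_false, Bool.and_true]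
        rw [hsym i (by omega)]
      · rw [hrevDS (n - 1 - τ) (by omega)]
        have he : n - 1 - (n - 1 - τ) = τ := by omega
        rw [he, hSspec τ]
        simp
      · have h1 : ¬ (n - 1 - τ = τ) := by omega
        have h2 := hsym (n - 1 - τ) hc2
        have he : n - 1 - (n - 1 - τ) = τ := by omega
        rw [he] at h2
        rw [hSspec (n - 1 - τ), h2, hRτ]
        simp [h1]
    · refine ⟨j0, by omega, ?_, ?_, ?_⟩
      · intro i hi
        rw [hrevDS i (by omega), hSspec (n - 1 - i), hSspec i]
        have h1 : ¬ (n - 1 - i = τ) := by omega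
        have h2 : ¬ (i = τ) := by omega
        simp only [h1, h2, decide_false, Bool.not_false, Bool.and_true]
        rw [hsym i hi]
      · rw [hrevDS j0 (by omega), hSspec (n - 1 - j0), hrev0]
        simp
      · rw [hSspec j0, hself]
        simp [hcase]

def rowA (C : Finset (ℤ × ℤ)) (n : ℕ) (y : ℤ) : List Bool :=
  (List.range n).map (fun x : ℕ => decide (((x : ℤ), y) ∈ C))

theorem rowA_length (C : Finset (ℤ × ℤ)) (n : ℕ) (y : ℤ) : (rowA C n y).length = n := by
  simp [rowA]

theorem rowA_getD (C : Finset (ℤ × ℤ)) (n : ℕ) (y : ℤ) {j : ℕ} (hj : j < n) :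
    (rowA C n y).getD j false = decide (((j : ℤ), y) ∈ C) := by
  simp [rowA, getD_map_range, hj]

theorem map_range_reverse {α : Type*} (g : ℕ → α) (M : ℕ) :
    ((List.range M).map g).reverse = (List.range M).map (fun i => g (M - 1 - i)) := by
  apply List.ext_getElem (by simp)
  intro i h1 h2
  simp [List.getElem_reverse]

theorem rowA_reverse (C : Finset (ℤ × ℤ)) (n : ℕ) (y : ℤ) :
    (rowA C n y).reverse = (List.range n).map (fun x : ℕ => decide (((n : ℤ) - 1 - x, y) ∈ C)) := by
  unfold rowA
  rw [map_range_reverse]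
  apply List.map_congr_left
  intro i hi
  rw [List.mem_range] at hi
  have : ((n - 1 - i : ℕ) : ℤ) = (n : ℤ) - 1 - (i : ℤ) := by omega
  rw [this]

theorem scan_flatten (C : Finset (ℤ × ℤ)) (M N : ℕ) (f : ℕ → ℕ → ℤ × ℤ) :
    scanStr C M N f
      = ((List.range M).map (fun i => (List.range N).map (fun j => decide (f i j ∈ C)))).flatten := by
  unfold scanStr
  rw [List.flatMap_def]

theorem lamAB_eq (C : Finset (ℤ × ℤ)) (n m : ℕ) :
    lamAB C n m = ((List.range m).map (fun y : ℕ => rowA C n (y : ℤ))).flatten := by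
  rw [lamAB, scan_flatten]; rfl

theorem lamBA_eq (C : Finset (ℤ × ℤ)) (n m : ℕ) :
    lamBA C n m = (((List.range m).map (fun y : ℕ => rowA C n (y : ℤ))).map List.reverse).flatten := by
  rw [lamBA, scan_flatten, List.map_map]
  congr 1
  apply List.map_congr_left
  intro i _
  exact (rowA_reverse C n (i : ℤ)).symm

theorem lamDC_eq (C : Finset (ℤ × ℤ)) (n m : ℕ) :
    lamDC C n m = (((List.range m).map (fun y : ℕ => rowA C n (y : ℤ))).reverse).flatten := by
  rw [lamDC, scan_flatten, map_range_reverse]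
  congr 1
  apply List.map_congr_left
  intro i hi
  rw [List.mem_range] at hi
  have : ((m - 1 - i : ℕ) : ℤ) = (m : ℤ) - 1 - (i : ℤ) := by omega
  rw [this]
  rfl

theorem lamCD_eq (C : Finset (ℤ × ℤ)) (n m : ℕ) :
    lamCD C n m
      = ((((List.range m).map (fun y : ℕ => rowA C n (y : ℤ))).map List.reverse).reverse).flatten := by
  rw [lamCD, scan_flatten, List.map_map, map_range_reverse]
  congr 1
  apply List.map_congr_left
  intro i hi
  rw [List.mem_range] at hi
  have h : ((m - 1 - i : ℕ) : ℤ) = (m : ℤ) - 1 - (i : ℤ) := by omega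
  show _ = ((rowA C n ((m - 1 - i : ℕ) : ℤ)).reverse)
  rw [h, rowA_reverse]

theorem ext_getD {a b : List Bool} (hl : a.length = b.length)
    (h : ∀ i, i < b.length → a.getD i false = b.getD i false) : a = b := by
  apply List.ext_getElem hl
  intro i h1 h2
  rw [← getD_lt h1, ← getD_lt h2]
  exact h i h2

/-- Let `C` be an asymmetric configuration with `|C| ≥ 3` whose
smallest enclosing rectangle (normalized to corners `A=(0,0)`, `B=(n-1,0)`,
`C=(n-1,m-1)`, `D=(0,m-1)`) has shorter side `|AB| = n ≥ 2` and `|AD| = m ≥ n`,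
and whose unique lexicographically largest associated string is `λ_AB`.  Let `T`
be the tail of `C`, let `u = (0,1)` be the unit vector perpendicular to `AB`
pointing from side `AB` toward side `CD`, and set `C_new = (C \ {T}) ∪ {T + u}`.
Then the smallest enclosing rectangle of `C_new` is the `(m+1) × n` rectangle
obtained from `R` by moving side `CD` one unit in direction `u`, this rectangle
is non-square, and the string of `C_new` read from corner `A` in the direction
of `AB` is its unique lexicographically largest associated string; in particular
`C_new` is asymmetric with leading corner again `A`. -/
theorem tail_up_keeps_asymmetry_and_leading_corner
    (C : Finset (ℤ × ℤ)) (n m : ℕ) (hn : 2 ≤ n) (hnm : n ≤ m)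
    (hcard : 3 ≤ C.card) (hser : isSER C n m)
    (hlead : leadingABCfg C n m)
    (T : ℤ × ℤ) (hT : isTail C T) :
    isSER (insert (T.1, T.2 + 1) (C.erase T)) n (m + 1) ∧
    n ≠ m + 1 ∧
    leadingABCfg (insert (T.1, T.2 + 1) (C.erase T)) n (m + 1) := by
  obtain ⟨hbound, ⟨pL, hpL, hpL1⟩, ⟨pR, hpR, hpR1⟩, ⟨pB, hpB, hpB2⟩, ⟨pT, hpT, hpT2⟩⟩ := hser
  obtain ⟨hTC, hTtail⟩ := hT
  have hTb := hbound T hTC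
  have hT2 : T.2 = (m : ℤ) - 1 := by
    by_contra hne
    have hne' : pT ≠ T := by
      intro h; rw [h] at hpT2; exact hne hpT2
    have hs := hTtail pT hpT hne'
    unfold scanLt at hs
    rcases hs with hs | ⟨hs, -⟩ <;> omega
  set Cn := insert (T.1, T.2 + 1) (C.erase T) with hCn
  have hmemCn : ∀ q : ℤ × ℤ, q ∈ Cn ↔ (q = (T.1, T.2 + 1) ∨ (q ∈ C ∧ q ≠ T)) := by
    intro q
    simp [hCn, Finset.mem_insert, Finset.mem_erase]
    tauto
  refine ⟨?_, by omega, ?_⟩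
  · -- isSER
    refine ⟨?_, ?_, ?_, ?_, ?_⟩
    · intro p hp
      rcases (hmemCn p).mp hp with rfl | ⟨hp', -⟩
      · simp only
        push_cast
        omega
      · have := hbound p hp'
        push_cast
        omega
    · by_cases h : pL = T
      · exact ⟨(T.1, T.2 + 1), Finset.mem_insert_self _ _, by simp [← h, hpL1]⟩
      · exact ⟨pL, (hmemCn pL).mpr (Or.inr ⟨hpL, h⟩), hpL1⟩
    · by_cases h : pR = T
      · refine ⟨(T.1, T.2 + 1), Finset.mem_insert_self _ _, ?_⟩
        simp only
        rw [← h, hpR1]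
      · exact ⟨pR, (hmemCn pR).mpr (Or.inr ⟨hpR, h⟩), hpR1⟩
    · have h : pB ≠ T := by
        intro h; rw [h] at hpB2; omega
      exact ⟨pB, (hmemCn pB).mpr (Or.inr ⟨hpB, h⟩), hpB2⟩
    · refine ⟨(T.1, T.2 + 1), Finset.mem_insert_self _ _, ?_⟩
      simp only
      push_cast
      omega
  · -- leading corner
    obtain ⟨k, rfl⟩ : ∃ k, m = k + 2 := ⟨m - 2, by omega⟩
    set τn := T.1.toNat with hτdef
    have hτ : (τn : ℤ) = T.1 := Int.toNat_of_nonneg hTb.1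
    have hτn : τn < n := by omega
    have hT2' : T.2 = ((k + 1 : ℕ) : ℤ) := by push_cast; push_cast at hT2; omega
    set R0 : List Bool := rowA C n ((0 : ℕ) : ℤ) with hR0def
    set M : List (List Bool) := (List.range k).map (fun y : ℕ => rowA C n ((y + 1 : ℕ) : ℤ))
      with hMdef
    set Rlast : List Bool := rowA C n ((k + 1 : ℕ) : ℤ) with hRlastdef
    set S : List Bool := rowA Cn n ((k + 1 : ℕ) : ℤ) with hSdef
    set E : List Bool := eb n τn with hEdef
    have hTeq : (((τn : ℕ) : ℤ), ((k + 1 : ℕ) : ℤ)) = T := by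
      rw [hτ, ← hT2']
    have hRlastτ : Rlast.getD τn false = true := by
      rw [hRlastdef, rowA_getD _ _ _ hτn, hTeq]
      simpa using hTC
    have hafter : ∀ j, τn < j → Rlast.getD j false = false := by
      intro j hj
      by_cases hjn : j < n
      · rw [hRlastdef, rowA_getD _ _ _ hjn]
        simp only [decide_eq_false_iff_not]
        intro hmem
        have hne : (((j : ℕ) : ℤ), ((k + 1 : ℕ) : ℤ)) ≠ T := by
          intro h
          have h1 : ((j : ℕ) : ℤ) = T.1 := congrArg Prod.fst h
          omega
        have hs := hTtail _ hmem hne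
        unfold scanLt at hs
        simp only at hs
        rcases hs with hs | ⟨-, hs⟩ <;> omega
      · exact getD_eq_false_of_le (by rw [hRlastdef, rowA_length]; omega)
    have hSspec : ∀ j, S.getD j false = (Rlast.getD j false && !(decide (j = τn))) := by
      intro j
      by_cases hjn : j < n
      · rw [hSdef, hRlastdef, rowA_getD _ _ _ hjn, rowA_getD _ _ _ hjn]
        have hiff : ((((j : ℕ) : ℤ), ((k + 1 : ℕ) : ℤ)) ∈ Cn)
            ↔ (((((j : ℕ) : ℤ), ((k + 1 : ℕ) : ℤ)) ∈ C) ∧ ¬ (j = τn)) := by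
          rw [hmemCn]
          constructor
          · rintro (heq | ⟨hc, hne⟩)
            · exfalso
              have h2 : ((k + 1 : ℕ) : ℤ) = T.2 + 1 := congrArg Prod.snd heq
              omega
            · refine ⟨hc, fun hjτ => hne ?_⟩
              rw [← hTeq, hjτ]
          · rintro ⟨hc, hne⟩
            refine Or.inr ⟨hc, fun heq => hne ?_⟩
            have h1 : ((j : ℕ) : ℤ) = T.1 := congrArg Prod.fst heq
            omega
        push_cast at hiff ⊢
        simp [hiff]
      · rw [getD_eq_false_of_le (by rw [hSdef, rowA_length]; omega),
          getD_eq_false_of_le (by rw [hRlastdef, rowA_length]; omega)]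
        simp
    have hS_len : S.length = n := by rw [hSdef]; exact rowA_length _ _ _
    have hRlast_len : Rlast.length = n := by rw [hRlastdef]; exact rowA_length _ _ _
    have hR0_len : R0.length = n := by rw [hR0def]; exact rowA_length _ _ _
    -- block decompositions
    have hRA : (List.range (k + 2)).map (fun y : ℕ => rowA C n (y : ℤ))
        = (R0 :: M) ++ [Rlast] := by
      rw [List.range_succ, List.map_append, List.range_succ_eq_map, List.map_cons,
        List.map_map]
      rfl
    have hrow_eq : ∀ y : ℕ, y < k + 1 → rowA Cn n (y : ℤ) = rowA C n (y : ℤ) := by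
      intro y hy
      unfold rowA
      apply List.map_congr_left
      intro x hx
      apply decide_eq_decide.mpr
      rw [hmemCn]
      constructor
      · rintro (heq | ⟨hc, -⟩)
        · exfalso
          have h2 : ((y : ℕ) : ℤ) = T.2 + 1 := congrArg Prod.snd heq
          omega
        · exact hc
      · intro hc
        refine Or.inr ⟨hc, fun heq => ?_⟩
        have h2 : ((y : ℕ) : ℤ) = T.2 := congrArg Prod.snd heq
        omega
    have hE : rowA Cn n ((k + 2 : ℕ) : ℤ) = E := by
      rw [hEdef]
      unfold rowA eb
      apply List.map_congr_left
      intro x hx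
      rw [List.mem_range] at hx
      apply decide_eq_decide.mpr
      rw [hmemCn]
      constructor
      · rintro (heq | ⟨hc, -⟩)
        · have h1 : ((x : ℕ) : ℤ) = T.1 := congrArg Prod.fst heq
          omega
        · exfalso
          have := (hbound _ hc).2.2.2
          simp only at this
          push_cast at this
          omega
      · intro hxτ
        left
        have h1 : ((x : ℕ) : ℤ) = T.1 := by omega
        have h2 : ((k + 2 : ℕ) : ℤ) = T.2 + 1 := by omega
        rw [Prod.ext_iff]
        exact ⟨h1, h2⟩
    have hRAnew : (List.range (k + 3)).map (fun y : ℕ => rowA Cn n (y : ℤ))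
        = (R0 :: M) ++ [S, E] := by
      rw [List.range_succ, List.map_append, List.range_succ, List.map_append]
      have h1 : (List.range (k + 1)).map (fun y : ℕ => rowA Cn n (y : ℤ))
          = (List.range (k + 1)).map (fun y : ℕ => rowA C n (y : ℤ)) := by
        apply List.map_congr_left
        intro y hy
        rw [List.mem_range] at hy
        exact hrow_eq y (by omega)
      rw [h1, List.range_succ_eq_map, List.map_cons, List.map_map]
      simp only [List.map_singleton, hE]
      rw [← hSdef]
      simp [hR0def, hMdef]
    -- block length facts
    have hMblk : ∀ b ∈ M, b.length = n := by
      rw [hMdef]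
      intro b hb
      simp only [List.mem_map] at hb
      obtain ⟨y, -, rfl⟩ := hb
      exact rowA_length _ _ _
    have hRAblocks : ∀ b ∈ (List.range (k + 2)).map (fun y : ℕ => rowA C n (y : ℤ)),
        b.length = n := by
      intro b hb
      simp only [List.mem_map] at hb
      obtain ⟨y, -, rfl⟩ := hb
      exact rowA_length _ _ _
    have hRAnblocks : ∀ b ∈ (List.range (k + 3)).map (fun y : ℕ => rowA Cn n (y : ℤ)),
        b.length = n := by
      intro b hb
      simp only [List.mem_map] at hb
      obtain ⟨y, -, rfl⟩ := hb
      exact rowA_length _ _ _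
    have hrevblk : ∀ (L : List (List Bool)), (∀ b ∈ L, b.length = n) →
        ∀ b ∈ L.map List.reverse, b.length = n := by
      intro L hL b hb
      simp only [List.mem_map] at hb
      obtain ⟨c, hc, rfl⟩ := hb
      simp [hL c hc]
    have hrevoblk : ∀ (L : List (List Bool)), (∀ b ∈ L, b.length = n) →
        ∀ b ∈ L.reverse, b.length = n := by
      intro L hL b hb
      exact hL b (List.mem_reverse.mp hb)
    -- extract the three hypotheses
    have hBA : lexLt (lamBA C n (k + 2)) (lamAB C n (k + 2)) := by
      by_cases hsq : n = k + 2
      · have h := hlead.2 1 (by simp [assocStrings, if_pos hsq, strings8]) (by decide)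
        simpa [assocStrings, if_pos hsq, strings8] using h
      · have h := hlead.2 1 (by simp [assocStrings, if_neg hsq, strings4]) (by decide)
        simpa [assocStrings, if_neg hsq, strings4] using h
    have hCD : lexLt (lamCD C n (k + 2)) (lamAB C n (k + 2)) := by
      by_cases hsq : n = k + 2
      · have h := hlead.2 2 (by simp [assocStrings, if_pos hsq, strings8]) (by decide)
        simpa [assocStrings, if_pos hsq, strings8] using h
      · have h := hlead.2 2 (by simp [assocStrings, if_neg hsq, strings4]) (by decide)
        simpa [assocStrings, if_neg hsq, strings4] using h
    have hDC : lexLt (lamDC C n (k + 2)) (lamAB C n (k + 2)) := by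
      by_cases hsq : n = k + 2
      · have h := hlead.2 3 (by simp [assocStrings, if_pos hsq, strings8]) (by decide)
        simpa [assocStrings, if_pos hsq, strings8] using h
      · have h := hlead.2 3 (by simp [assocStrings, if_neg hsq, strings4]) (by decide)
        simpa [assocStrings, if_neg hsq, strings4] using h
    -- block-level hypotheses
    have H1 : List.Lex lexLt (((R0 :: M) ++ [Rlast]).map List.reverse)
        ((R0 :: M) ++ [Rlast]) := by
      rw [← hRA]
      exact (flat_lex (hrevblk _ hRAblocks) hRAblocks (by simp)).mp
        (by rw [← lamBA_eq, ← lamAB_eq]; exact hBA)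
    have H2 : List.Lex lexLt (Rlast.reverse :: ((M.map List.reverse).reverse ++ [R0.reverse]))
        (R0 :: (M ++ [Rlast])) := by
      have h := (flat_lex (hrevoblk _ (hrevblk _ hRAblocks)) hRAblocks (by simp)).mp
        (by rw [← lamCD_eq, ← lamAB_eq]; exact hCD)
      rw [hRA] at h
      have e3 : (((R0 :: M) ++ [Rlast]).map List.reverse).reverse
          = Rlast.reverse :: ((M.map List.reverse).reverse ++ [R0.reverse]) := by simp
      have e2 : (R0 :: M) ++ [Rlast] = R0 :: (M ++ [Rlast]) := by simp
      rwa [e3, e2] at h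
    have H3 : List.Lex lexLt (Rlast :: (M.reverse ++ [R0])) (R0 :: (M ++ [Rlast])) := by
      have h := (flat_lex (hrevoblk _ hRAblocks) hRAblocks (by simp)).mp
        (by rw [← lamDC_eq, ← lamAB_eq]; exact hDC)
      rw [hRA] at h
      have e1 : ((R0 :: M) ++ [Rlast]).reverse = Rlast :: (M.reverse ++ [R0]) := by simp
      have e2 : (R0 :: M) ++ [Rlast] = R0 :: (M ++ [Rlast]) := by simp
      rwa [e1, e2] at h
    have hE_len : E.length = n := by rw [hEdef]; exact eb_length _ _
    -- helper: if Rlast = eb n τn then S = zb n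
    have hSzb : Rlast = eb n τn → S = zb n := by
      intro hRe
      apply ext_getD (by rw [hS_len, zb_length])
      intro i hi
      rw [zb_length] at hi
      rw [hSspec i, hRe, eb_getD n τn i hi, zb_getD]
      exact Bool.and_not_self _
    -- goal 1 : BA comparison, block level
    have G1blk : List.Lex lexLt (((R0 :: M) ++ [S, E]).map List.reverse)
        ((R0 :: M) ++ [S, E]) := by
      rw [List.map_append] at H1 ⊢
      rcases my_lex_append_split _ _ (by simp) H1 with hα | ⟨hβ, hγ⟩
      · exact my_lex_append_left hα (by simp) _ _
      · have hR : lexLt Rlast.reverse Rlast := by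
          apply lex_singleton
          simpa using hγ
        rcases BLK1 hτn hRlast_len hS_len hRlastτ hafter hSspec hR with hi | ⟨hz, h2τ⟩
        · rw [hβ]
          apply my_lex_append_right
          exact List.Lex.rel hi
        · have hRe : Rlast = eb n τn := by
            apply ext_getD (by rw [hRlast_len, eb_length])
            intro i hi
            rw [eb_length] at hi
            rw [eb_getD n τn i hi]
            by_cases hiτ : i = τn
            · rw [hiτ, hRlastτ]; simp
            · rw [hz i hiτ]; simp [hiτ]
          have hSz : S = zb n := hSzb hRe
          rw [hβ]
          apply my_lex_append_right
          have hrevS : S.reverse = S := by rw [hSz, zb_reverse, ← hSz]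
          simp only [List.map_cons, List.map_nil, hrevS]
          apply List.Lex.cons
          apply List.Lex.rel
          rw [hEdef, eb_reverse n τn hτn]
          exact lexLt_eb_eb (by omega) (by omega)
    -- goal 3 : DC comparison, block level
    have G3blk : List.Lex lexLt (E :: S :: (M.reverse ++ [R0]))
        (R0 :: (M ++ [S, E])) := by
      rcases lexLt_trichotomy (a := E) (b := R0) (by rw [hE_len, hR0_len]) with hlt | heq | hgt
      · exact List.Lex.rel hlt
      · rcases my_lex_cons_iff.mp H3 with h | ⟨hRR0, h⟩
        · rw [← heq, hEdef] at h
          exact absurd h (not_lexLt_eb_of_true hRlast_len hRlastτ)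
        · -- Rlast = R0 = E = eb n τn
          have hRe : Rlast = eb n τn := by rw [hRR0, ← heq, hEdef]
          have hSz : S = zb n := hSzb hRe
          rcases my_lex_append_split _ _ (by simp) h with hMM | ⟨-, habs⟩
          · rw [heq]
            apply List.Lex.cons
            have hR0e : R0 = eb n τn := by rw [← hRR0, hRe]
            rw [hSz, hR0e]
            have hc := CORE n M.reverse M hMblk hMM
            have h2 := my_lex_append_left hc (by simp) [eb n τn] [eb n τn]
            simpa using h2
          · rw [hRR0] at habs
            exact absurd habs (my_lex_irrefl (r := lexLt) lexLt_irrefl _)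
      · exfalso
        obtain ⟨k0, hk0, hpre0, hf0, ht0⟩ :=
          (lexLt_iff (by rw [hR0_len, hE_len])).mp hgt
        rw [hE_len] at hk0
        rw [hEdef, eb_getD n τn k0 hk0] at ht0
        have hk0τ : k0 = τn := by simpa using ht0
        rw [hk0τ] at hf0 hpre0
        have hR0pre : ∀ i, i ≤ τn → R0.getD i false = false := by
          intro i hi
          rcases Nat.lt_or_ge i τn with h | h
          · have := hpre0 i h
            rw [hEdef, eb_getD n τn i (by omega)] at this
            simpa [Nat.ne_of_lt h] using this
          · have hiτ : i = τn := by omega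
            rw [hiτ]; exact hf0
        rcases my_lex_cons_iff.mp H3 with h | ⟨hRR0, -⟩
        · obtain ⟨k1, hk1, hpre1, hf1, ht1⟩ :=
            (lexLt_iff (by rw [hRlast_len, hR0_len])).mp h
          have hk1τ : τn < k1 := by
            by_contra hc
            rw [hR0pre k1 (by omega)] at ht1
            exact absurd ht1 (by simp)
          have hpp := hpre1 τn hk1τ
          rw [hRlastτ, hR0pre τn le_rfl] at hpp
          exact absurd hpp (by simp)
        · rw [hRR0, hR0pre τn le_rfl] at hRlastτ
          exact absurd hRlastτ (by simp)
    -- goal 2 : CD comparison, block level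
    have G2blk : List.Lex lexLt
        (E.reverse :: (S.reverse :: ((M.map List.reverse).reverse ++ [R0.reverse])))
        (R0 :: (M ++ [S, E])) := by
      have hErev : E.reverse = eb n (n - 1 - τn) := by rw [hEdef, eb_reverse n τn hτn]
      have hErev_len : E.reverse.length = n := by simp [hE_len]
      have hRlrev_t : Rlast.reverse.getD (n - 1 - τn) false = true := by
        rw [getD_reverse (by rw [hRlast_len]; omega), hRlast_len]
        have he : n - 1 - (n - 1 - τn) = τn := by omega
        rw [he, hRlastτ]
      rcases lexLt_trichotomy (a := E.reverse) (b := R0) (by rw [hErev_len, hR0_len])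
        with hlt | heq | hgt
      · exact List.Lex.rel hlt
      · rcases my_lex_cons_iff.mp H2 with h | ⟨hRR0, h⟩
        · rw [← heq, hErev] at h
          exact absurd h (not_lexLt_eb_of_true (by simp [hRlast_len]) hRlrev_t)
        · have hRe : Rlast = eb n τn := by
            have h2 : Rlast.reverse = E.reverse := by rw [hRR0, ← heq]
            have h3 := List.reverse_injective h2
            rw [h3, hEdef]
          have hSz : S = zb n := hSzb hRe
          have hR0rev : R0.reverse = eb n τn := by
            rw [← hRR0, List.reverse_reverse, hRe]
          rcases my_lex_append_split _ _ (by simp) h with hMM | ⟨-, habs⟩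
          · rw [heq]
            apply List.Lex.cons
            rw [hSz, zb_reverse, hR0rev, hEdef]
            have hc := CORE n (M.map List.reverse).reverse M hMblk hMM
            have h2 := my_lex_append_left hc (by simp) [eb n τn] [eb n τn]
            simpa using h2
          · rw [hR0rev, hRe] at habs
            exact absurd habs (my_lex_irrefl (r := lexLt) lexLt_irrefl _)
      · exfalso
        obtain ⟨k0, hk0, hpre0, hf0, ht0⟩ :=
          (lexLt_iff (by rw [hR0_len, hErev_len])).mp hgt
        rw [hErev_len] at hk0
        rw [hErev, eb_getD n (n - 1 - τn) k0 hk0] at ht0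
        have hk0τ : k0 = n - 1 - τn := by simpa using ht0
        rw [hk0τ] at hf0 hpre0
        have hR0pre : ∀ i, i ≤ n - 1 - τn → R0.getD i false = false := by
          intro i hi
          rcases Nat.lt_or_ge i (n - 1 - τn) with hlt2 | hge
          · have := hpre0 i hlt2
            rw [hErev, eb_getD n (n - 1 - τn) i (by omega)] at this
            simpa [Nat.ne_of_lt hlt2] using this
          · have hiτ : i = n - 1 - τn := by omega
            rw [hiτ]; exact hf0
        rcases my_lex_cons_iff.mp H2 with h | ⟨hRR0, -⟩
        · obtain ⟨k1, hk1, hpre1, hf1, ht1⟩ :=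
            (lexLt_iff (by simp [hRlast_len, hR0_len])).mp h
          have hk1τ : n - 1 - τn < k1 := by
            by_contra hc
            rw [hR0pre k1 (by omega)] at ht1
            exact absurd ht1 (by simp)
          have hpp := hpre1 (n - 1 - τn) hk1τ
          rw [hRlrev_t, hR0pre (n - 1 - τn) le_rfl] at hpp
          exact absurd hpp (by simp)
        · rw [hRR0, hR0pre (n - 1 - τn) le_rfl] at hRlrev_t
          exact absurd hRlrev_t (by simp)
    -- final assembly
    unfold leadingABCfg
    have hstr : assocStrings Cn n (k + 2 + 1) = strings4 Cn n (k + 2 + 1) := by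
      unfold assocStrings
      rw [if_neg (by omega)]
    rw [hstr]
    constructor
    · simp [strings4]
    · intro j hj hj0
      have hj4 : j < 4 := by simpa [strings4] using hj
      interval_cases j
      · exact absurd rfl hj0
      · show lexLt (lamBA Cn n (k + 3)) (lamAB Cn n (k + 3))
        rw [lamBA_eq, lamAB_eq]
        apply (flat_lex (hrevblk _ hRAnblocks) hRAnblocks (by simp)).mpr
        rw [hRAnew]
        exact G1blk
      · show lexLt (lamCD Cn n (k + 3)) (lamAB Cn n (k + 3))
        rw [lamCD_eq, lamAB_eq]
        apply (flat_lex (hrevoblk _ (hrevblk _ hRAnblocks)) hRAnblocks (by simp)).mpr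
        rw [hRAnew]
        have e3 : (((R0 :: M) ++ [S, E]).map List.reverse).reverse
            = E.reverse :: (S.reverse :: ((M.map List.reverse).reverse ++ [R0.reverse])) := by
          simp
        have e2 : (R0 :: M) ++ [S, E] = R0 :: (M ++ [S, E]) := by simp
        rw [e3, e2]
        exact G2blk
      · show lexLt (lamDC Cn n (k + 3)) (lamAB Cn n (k + 3))
        rw [lamDC_eq, lamAB_eq]
        apply (flat_lex (hrevoblk _ hRAnblocks) hRAnblocks (by simp)).mpr
        rw [hRAnew]
        have e1 : ((R0 :: M) ++ [S, E]).reverse = E :: (S :: (M.reverse ++ [R0])) := by simp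
        have e2 : (R0 :: M) ++ [S, E] = R0 :: (M ++ [S, E]) := by simp
        rw [e1, e2]
        exact G3blk
end

section
/- Let C be a configuration whose smallest enclosing rectangle R = ABCD is non-square with shorter sides AB and CD. Suppose the corner A is occupied by a robot of C, the corners C and D are unoccupied, and C is not invariant under the reflection across the grid line parallel to AD that bisects R. Then C is asymmetric and its leading corner is one of the two corners A, B of the shorter side AB. -/
lemma lex_total_aux : ∀ (a b : List Bool), a ≠ b → lexLt a b ∨ lexLt b a := by
  intro a
  induction a with
  | nil =>
    intro b hb
    cases b with
    | nil => exact absurd rfl hb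
    | cons y b => exact Or.inl List.Lex.nil
  | cons x a ih =>
    intro b hb
    cases b with
    | nil => exact Or.inr List.Lex.nil
    | cons y b =>
      by_cases hxy : x = y
      · subst hxy
        have hab : a ≠ b := fun h => hb (by rw [h])
        rcases ih b hab with h | h
        · exact Or.inl (List.Lex.cons h)
        · exact Or.inr (List.Lex.cons h)
      · rcases lt_or_gt_of_ne hxy with h | h
        · exact Or.inl (List.Lex.rel h)
        · exact Or.inr (List.Lex.rel h)

lemma scanStr_head_aux (C : Finset (ℤ × ℤ)) (M N : ℕ) (hM : 0 < M) (hN : 0 < N)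
    (f : ℕ → ℕ → ℤ × ℤ) : ∃ l, scanStr C M N f = decide (f 0 0 ∈ C) :: l := by
  obtain ⟨M', rfl⟩ := Nat.exists_eq_succ_of_ne_zero hM.ne'
  obtain ⟨N', rfl⟩ := Nat.exists_eq_succ_of_ne_zero hN.ne'
  refine ⟨((List.range N').map fun j => decide (f 0 (j+1) ∈ C)) ++
    ((List.range M').map (fun i => i+1)).flatMap
      (fun i => (List.range (N'+1)).map fun j => decide (f i j ∈ C)), ?_⟩
  rw [scanStr, List.range_succ_eq_map (n := M'), List.flatMap_cons, List.range_succ_eq_map (n := N'),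
    List.map_cons, List.cons_append, List.map_map]
  rfl

lemma flatMap_inj_aux (N : ℕ) (F G : ℕ → ℕ → Bool) :
    ∀ (M : ℕ), (List.range M).flatMap (fun i => (List.range N).map (F i)) =
      (List.range M).flatMap (fun i => (List.range N).map (G i)) →
    ∀ i < M, ∀ j < N, F i j = G i j := by
  intro M
  induction M with
  | zero => intro _ i hi; omega
  | succ M ih =>
    intro h i hi j hj
    rw [List.range_succ, List.flatMap_append, List.flatMap_append] at h
    simp only [List.flatMap_cons, List.flatMap_nil, List.append_nil] at h
    obtain ⟨h1, h2⟩ := List.append_inj' h (by simp)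
    rcases Nat.lt_succ_iff_lt_or_eq.mp hi with hi' | rfl
    · exact ih h1 i hi' j hj
    · exact List.map_inj_left.mp h2 j (List.mem_range.mpr hj)

lemma sym_of_eq_aux (C : Finset (ℤ × ℤ)) (n m : ℕ) (hser : isSER C n m)
    (h : lamAB C n m = lamBA C n m) :
    C.image (fun p => ((n : ℤ) - 1 - p.1, p.2)) = C := by
  have key : ∀ p ∈ C, ((n : ℤ) - 1 - p.1, p.2) ∈ C := by
    intro p hp
    obtain ⟨hx0, hx1, hy0, hy1⟩ := hser.1 p hp
    have hj : p.1.toNat < n := by omega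
    have hi : p.2.toNat < m := by omega
    have := flatMap_inj_aux n (fun i j => decide (((j : ℤ), (i : ℤ)) ∈ C))
      (fun i j => decide (((n : ℤ) - 1 - (j : ℤ), (i : ℤ)) ∈ C)) m h p.2.toNat hi p.1.toNat hj
    simp only [decide_eq_decide] at this
    rw [Int.toNat_of_nonneg hx0, Int.toNat_of_nonneg hy0] at this
    have hp' : ((p.1 : ℤ), (p.2 : ℤ)) ∈ C := by rwa [Prod.mk.eta]
    exact this.mp hp'
  apply Finset.ext
  intro p
  constructor
  · intro hp
    obtain ⟨q, hq, rfl⟩ := Finset.mem_image.mp hp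
    exact key q hq
  · intro hp
    refine Finset.mem_image.mpr ⟨((n : ℤ) - 1 - p.1, p.2), key p hp, ?_⟩
    simp

lemma head_true_of_lex_aux {b : Bool} {l1 l2 : List Bool}
    (h : List.Lex (· < ·) (true :: l1) (b :: l2)) : b = true := by
  cases h with
  | rel h => rw [Bool.lt_iff] at h; exact absurd h.1 (by simp)
  | cons h => rfl

/-- Let `C` be a configuration whose smallest enclosing
rectangle (normalized to corners `A=(0,0)`, `B=(n-1,0)`, `C=(n-1,m-1)`,
`D=(0,m-1)`) is non-square with shorter sides `AB` and `CD` (so `n < m`).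
Suppose the corner `A` is occupied by a robot of `C`, the corners `C` and `D`
are unoccupied, and `C` is not invariant under the reflection
`(x, y) ↦ (n-1-x, y)` across the grid line parallel to `AD` that bisects `R`.
Then `C` is asymmetric and its leading corner is one of the two corners `A`,
`B` of the shorter side `AB` (i.e. the unique largest associated string is
`λ_AB` or `λ_BA`). -/
theorem leading_corner_on_side_AB
    (C : Finset (ℤ × ℤ)) (n m : ℕ) (hn : 1 ≤ n) (hnm : n < m)
    (hser : isSER C n m)
    (hA : ((0 : ℤ), (0 : ℤ)) ∈ C)
    (hC : ((n : ℤ) - 1, (m : ℤ) - 1) ∉ C)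
    (hD : ((0 : ℤ), (m : ℤ) - 1) ∉ C)
    (hnosym : C.image (fun p => ((n : ℤ) - 1 - p.1, p.2)) ≠ C) :
    asymmetricCfg C n m ∧
    (uniqueMaxAt (strings4 C n m) 0 ∨ uniqueMaxAt (strings4 C n m) 1) := by
  have hm0 : 0 < m := by omega
  have hn0 : 0 < n := by omega
  obtain ⟨la, hla⟩ := scanStr_head_aux C m n hm0 hn0 (fun y x => ((x : ℤ), (y : ℤ)))
  obtain ⟨lb, hlb⟩ := scanStr_head_aux C m n hm0 hn0 (fun y x => ((n : ℤ) - 1 - x, (y : ℤ)))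
  obtain ⟨lc, hlc⟩ := scanStr_head_aux C m n hm0 hn0
    (fun y x => ((n : ℤ) - 1 - x, (m : ℤ) - 1 - y))
  obtain ⟨ld, hld⟩ := scanStr_head_aux C m n hm0 hn0 (fun y x => ((x : ℤ), (m : ℤ) - 1 - y))
  have hAB : lamAB C n m = true :: la := by
    rw [lamAB, hla]; simp only [Nat.cast_zero]; rw [decide_eq_true hA]
  have hBA : lamBA C n m = decide (((n : ℤ) - 1 - ((0:ℕ):ℤ), ((0:ℕ):ℤ)) ∈ C) :: lb := by
    rw [lamBA, hlb]
  have hCD : lamCD C n m = false :: lc := by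
    rw [lamCD, hlc]; simp only [Nat.cast_zero, sub_zero]
    rw [decide_eq_false hC]
  have hDC : lamDC C n m = false :: ld := by
    rw [lamDC, hld]; simp only [Nat.cast_zero, sub_zero]
    rw [decide_eq_false hD]
  have hABBA : lamAB C n m ≠ lamBA C n m := fun h => hnosym (sym_of_eq_aux C n m hser h)
  have hft : ((· < ·) : Bool → Bool → Prop) false true := by decide
  have main : uniqueMaxAt (strings4 C n m) 0 ∨ uniqueMaxAt (strings4 C n m) 1 := by
    rcases lex_total_aux _ _ hABBA with hlt | hlt
    · -- lamBA is the max
      have hBAh : lamBA C n m = true :: lb := by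
        rw [hBA]
        rw [hAB, hBA] at hlt
        rw [head_true_of_lex_aux hlt]
      right
      refine ⟨by simp [strings4], ?_⟩
      intro j hj hji
      simp only [strings4, List.length_cons, List.length_nil] at hj
      interval_cases j
      · exact hlt
      · omega
      · show lexLt (lamCD C n m) (lamBA C n m)
        rw [hCD, hBAh]; exact List.Lex.rel hft
      · show lexLt (lamDC C n m) (lamBA C n m)
        rw [hDC, hBAh]; exact List.Lex.rel hft
    · -- lamAB is the max
      left
      refine ⟨by simp [strings4], ?_⟩
      intro j hj hji
      simp only [strings4, List.length_cons, List.length_nil] at hj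
      interval_cases j
      · omega
      · exact hlt
      · show lexLt (lamCD C n m) (lamAB C n m)
        rw [hCD, hAB]; exact List.Lex.rel hft
      · show lexLt (lamDC C n m) (lamAB C n m)
        rw [hDC, hAB]; exact List.Lex.rel hft
  refine ⟨?_, main⟩
  have hne : n ≠ m := by omega
  rcases main with h | h
  · exact ⟨0, by rw [assocStrings, if_neg hne]; exact h⟩
  · exact ⟨1, by rw [assocStrings, if_neg hne]; exact h⟩
end

section
/- Let n ≥ 2 and k = n². Let Q = {a, a+1, …, a+n−1} × {b, b+1, …, b+n−1} ⊂ ℤ² be an n × n block of grid points and let L = {(c, d), (c+1, d), …, (c+k−1, d)} ⊂ ℤ² be k consecutive grid points on a horizontal grid line. Then for every bijection f : Q → L there exists q ∈ Q with 2·(|f(q)₁ − q₁| + |f(q)₂ − q₂|) ≥ k − n. Consequently, in any relocation of k = n² robots initially occupying Q to final positions occupying L, some robot must make at least (k − √k)/2 unit moves along grid edges. -/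
/-- Let `n ≥ 2` and `k = n²`.  Let
`Q = {a, …, a+n-1} × {b, …, b+n-1} ⊂ ℤ²` be an `n × n` block of grid points and
let `L = {(c, d), …, (c+k-1, d)}` be `k` consecutive grid points on a horizontal
grid line.  Then for every bijection `f : Q → L` there exists `q ∈ Q` with
`2·(|f(q)₁ - q₁| + |f(q)₂ - q₂|) ≥ k - n`.  Consequently, in any relocation of
`k = n²` robots initially occupying `Q` to final positions occupying `L`, some
robot must make at least `(k - √k)/2 = (k - n)/2` unit moves along grid
edges. -/
theorem some_robot_moves_far
    (n : ℕ) (hn : 2 ≤ n) (k : ℕ) (hk : k = n ^ 2) (a b c d : ℤ)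
    (f : ℤ × ℤ → ℤ × ℤ)
    (hf : Set.BijOn f
      ((Set.Icc a (a + (n : ℤ) - 1)) ×ˢ (Set.Icc b (b + (n : ℤ) - 1)))
      ((Set.Icc c (c + (k : ℤ) - 1)) ×ˢ ({d} : Set ℤ))) :
    ∃ q ∈ (Set.Icc a (a + (n : ℤ) - 1)) ×ˢ (Set.Icc b (b + (n : ℤ) - 1)),
      2 * (|(f q).1 - q.1| + |(f q).2 - q.2|) ≥ (k : ℤ) - (n : ℤ) := by
  have hnZ : (2:ℤ) ≤ (n:ℤ) := by exact_mod_cast hn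
  have hkZ : (k:ℤ) = (n:ℤ)^2 := by rw [hk]; push_cast; ring
  have hk4 : (4:ℤ) ≤ (k:ℤ) := by nlinarith
  have hL1 : ((c, d) : ℤ × ℤ) ∈ (Set.Icc c (c + (k : ℤ) - 1)) ×ˢ ({d} : Set ℤ) := by
    refine ⟨?_, rfl⟩
    simp only [Set.mem_Icc]
    constructor <;> linarith
  have hL2 : ((c + (k:ℤ) - 1, d) : ℤ × ℤ) ∈
      (Set.Icc c (c + (k : ℤ) - 1)) ×ˢ ({d} : Set ℤ) := by
    refine ⟨?_, rfl⟩
    simp only [Set.mem_Icc]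
    constructor <;> linarith
  obtain ⟨q1, hq1, hfq1⟩ := hf.surjOn hL1
  obtain ⟨q2, hq2, hfq2⟩ := hf.surjOn hL2
  obtain ⟨hq1x, hq1y⟩ := hq1
  obtain ⟨hq2x, hq2y⟩ := hq2
  simp only [Set.mem_Icc] at hq1x hq2x
  obtain ⟨h1l, h1r⟩ := hq1x
  obtain ⟨h2l, h2r⟩ := hq2x
  have h1a := le_abs_self (c - q1.1)
  have h1b := neg_abs_le (c - q1.1)
  have h2a := le_abs_self (c + (k:ℤ) - 1 - q2.1)
  have h2b := neg_abs_le (c + (k:ℤ) - 1 - q2.1)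
  rcases le_or_gt (|c - q1.1|) (|c + (k:ℤ) - 1 - q2.1|) with h | h
  · refine ⟨q2, ⟨Set.mem_Icc.mpr ⟨h2l, h2r⟩, hq2y⟩, ?_⟩
    · rw [hfq2]
      have hy : (0:ℤ) ≤ |d - q2.2| := abs_nonneg _
      simp only []
      linarith
  · refine ⟨q1, ⟨Set.mem_Icc.mpr ⟨h1l, h1r⟩, hq1y⟩, ?_⟩
    · rw [hfq1]
      have hy : (0:ℤ) ≤ |d - q1.2| := abs_nonneg _
      simp only []
      linarith
end

section
/- Let C be a configuration whose smallest enclosing rectangle, after translating so that its corners are A = (0,0), B = (n−1, 0), C = (n−1, m−1), D = (0, m−1), has width n ≥ 1 and height m ≥ 1. Define ρ : ℤ² → ℤ² by ρ(x, y) = (n−1−x, m−1−y) (rotation by 180° about the centre of the rectangle). Then λ_AB = λ_CD if and only if ρ maps C onto C, i.e. C is invariant under the 180° rotation about the centre of its smallest enclosing rectangle. -/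

lemma scan_eq_iff (C D : Finset (ℤ × ℤ)) (M N : ℕ) (f g : ℕ → ℕ → ℤ × ℤ) :
    scanStr C M N f = scanStr D M N g ↔
      ∀ i < M, ∀ j < N, ((f i j ∈ C) ↔ (g i j ∈ D)) := by
  induction M with
  | zero => simp [scanStr]
  | succ M ih =>
    have hs : ∀ (E : Finset (ℤ × ℤ)) (u : ℕ → ℕ → ℤ × ℤ),
        scanStr E (M + 1) N u =
          scanStr E M N u ++ (List.range N).map (fun j => decide (u M j ∈ E)) := by
      intro E u
      simp [scanStr, List.range_succ]
    rw [hs, hs]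
    constructor
    · intro h
      have hlen : (scanStr C M N f).length = (scanStr D M N g).length := by
        simp [scanStr, Function.comp_def]
      obtain ⟨h1, h2⟩ := List.append_inj h hlen
      intro i hi j hj
      rcases Nat.lt_succ_iff_lt_or_eq.mp hi with hi | hEq
      · exact ih.mp h1 i hi j hj
      · subst hEq
        have hj' : j < (List.map (fun j => decide (f i j ∈ C)) (List.range N)).length := by
          simp [hj]
        have h3 : (List.range N).map (fun j => decide (f i j ∈ C)) =
            (List.range N).map (fun j => decide (g i j ∈ D)) := h2
        have := List.getElem_of_eq h3 hj'
        simp only [List.getElem_map, List.getElem_range] at this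
        exact decide_eq_decide.mp this
    · intro h
      have h1 : scanStr C M N f = scanStr D M N g :=
        ih.mpr (fun i hi j hj => h i (Nat.lt_succ_of_lt hi) j hj)
      have h2 : (List.range N).map (fun j => decide (f M j ∈ C)) =
          (List.range N).map (fun j => decide (g M j ∈ D)) := by
        refine List.map_congr_left ?_
        intro j hj
        exact decide_eq_decide.mpr (h M (Nat.lt_succ_self M) j (List.mem_range.mp hj))
      rw [h1, h2]

/-- Let `C` be a configuration whose smallest enclosing
rectangle, after translation, has corners `A = (0,0)`, `B = (n-1,0)`,
`C = (n-1,m-1)`, `D = (0,m-1)` with `n ≥ 1`, `m ≥ 1`.  Define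
`ρ(x, y) = (n-1-x, m-1-y)` (rotation by `180°` about the centre of the
rectangle).  Then `λ_AB = λ_CD` if and only if `ρ` maps `C` onto `C`, i.e. `C`
is invariant under the `180°` rotation about the centre of its smallest
enclosing rectangle. -/
theorem lamAB_eq_lamCD_iff_rotation_invariant
    (C : Finset (ℤ × ℤ)) (n m : ℕ) (hn : 1 ≤ n) (hm : 1 ≤ m)
    (hser : isSER C n m) :
    lamAB C n m = lamCD C n m ↔
      C.image (fun p => ((n : ℤ) - 1 - p.1, (m : ℤ) - 1 - p.2)) = C := by
  set ρ : ℤ × ℤ → ℤ × ℤ := fun p => ((n : ℤ) - 1 - p.1, (m : ℤ) - 1 - p.2) with hρ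
  have hρρ : ∀ p, ρ (ρ p) = p := by
    intro p
    simp only [hρ]
    exact Prod.ext_iff.mpr ⟨by dsimp; ring, by dsimp; ring⟩
  have hmem : ∀ p, p ∈ C.image ρ ↔ ρ p ∈ C := by
    intro p
    constructor
    · rintro hp
      obtain ⟨q, hq, rfl⟩ := Finset.mem_image.mp hp
      rwa [hρρ]
    · intro hp
      exact Finset.mem_image.mpr ⟨ρ p, hp, hρρ p⟩
  have hCD : lamCD C n m = lamAB (C.image ρ) n m := by
    rw [lamCD, lamAB, scan_eq_iff]
    intro i hi j hj
    rw [hmem]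
  rw [hCD, lamAB, lamAB, scan_eq_iff]
  have hboundsD : ∀ p ∈ C.image ρ,
      0 ≤ p.1 ∧ p.1 ≤ (n : ℤ) - 1 ∧ 0 ≤ p.2 ∧ p.2 ≤ (m : ℤ) - 1 := by
    intro p hp
    obtain ⟨q, hq, rfl⟩ := Finset.mem_image.mp hp
    obtain ⟨a, b, c, d⟩ := hser.1 q hq
    refine ⟨by simp [hρ]; omega, by simp [hρ]; omega, by simp [hρ]; omega, by simp [hρ]; omega⟩
  constructor
  · intro h
    ext p
    by_cases hb : 0 ≤ p.1 ∧ p.1 ≤ (n : ℤ) - 1 ∧ 0 ≤ p.2 ∧ p.2 ≤ (m : ℤ) - 1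
    · obtain ⟨a, b, c, d⟩ := hb
      have hx : p.1 = ((p.1.toNat : ℕ) : ℤ) := (Int.toNat_of_nonneg a).symm
      have hy : p.2 = ((p.2.toNat : ℕ) : ℤ) := (Int.toNat_of_nonneg c).symm
      have hxn : p.1.toNat < n := by omega
      have hym : p.2.toNat < m := by omega
      have := h p.2.toNat hym p.1.toNat hxn
      rw [← hx, ← hy] at this
      simp only [Prod.mk.eta] at this
      exact this.symm
    · constructor
      · intro hp; exact absurd (hboundsD p hp) hb
      · intro hp; exact absurd (hser.1 p hp) hb
  · intro h i hi j hj
    rw [h]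
end

section
/- Let C be a configuration whose smallest enclosing rectangle, after translating so that its corners are A = (0,0), B = (n−1, 0), C = (n−1, m−1), D = (0, m−1), has width n ≥ 1 and height m ≥ 1. Define σ_v : ℤ² → ℤ² by σ_v(x, y) = (n−1−x, y) (reflection across the vertical line bisecting the rectangle). Then λ_AB = λ_BA if and only if σ_v maps C onto C, i.e. C is invariant under reflection across the vertical bisector of its smallest enclosing rectangle. -/
lemma flatMap_eq_iff' {α β : Type*} (l : List α) (f g : α → List β)
    (h : ∀ a, (f a).length = (g a).length) :
    l.flatMap f = l.flatMap g ↔ ∀ a ∈ l, f a = g a := by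
  induction l with
  | nil => simp
  | cons a t ih =>
    simp only [List.flatMap_cons, List.mem_cons]
    constructor
    · intro he
      obtain ⟨h1, h2⟩ := List.append_inj he (h a)
      intro b hb
      rcases hb with rfl | hb
      · exact h1
      · exact (ih.mp h2) b hb
    · intro hall
      rw [hall a (Or.inl rfl), ih.mpr (fun b hb => hall b (Or.inr hb))]

lemma map_range_eq_iff {β : Type*} (N : ℕ) (f g : ℕ → β) :
    (List.range N).map f = (List.range N).map g ↔ ∀ j < N, f j = g j := by
  rw [List.map_eq_map_iff]
  simp [List.mem_range]

lemma scanStr_eq_iff (C : Finset (ℤ × ℤ)) (M N : ℕ) (f g : ℕ → ℕ → ℤ × ℤ) :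
    scanStr C M N f = scanStr C M N g ↔
      ∀ i < M, ∀ j < N, (f i j ∈ C ↔ g i j ∈ C) := by
  unfold scanStr
  rw [flatMap_eq_iff' _ _ _ (fun a => by simp)]
  constructor
  · intro h i hi j hj
    have := (map_range_eq_iff N _ _).mp (h i (List.mem_range.mpr hi)) j hj
    simpa using this
  · intro h i hi
    rw [map_range_eq_iff]
    intro j hj
    simp only [decide_eq_decide]
    exact h i (List.mem_range.mp hi) j hj

/-- Let `C` be a configuration whose smallest enclosing
rectangle, after translation, has corners `A = (0,0)`, `B = (n-1,0)`,
`C = (n-1,m-1)`, `D = (0,m-1)` with `n ≥ 1`, `m ≥ 1`.  Define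
`σ_v(x, y) = (n-1-x, y)` (reflection across the vertical line bisecting the
rectangle).  Then `λ_AB = λ_BA` if and only if `σ_v` maps `C` onto `C`, i.e.
`C` is invariant under reflection across the vertical bisector of its smallest
enclosing rectangle. -/
theorem lamAB_eq_lamBA_iff_vertical_reflection_invariant
    (C : Finset (ℤ × ℤ)) (n m : ℕ) (hn : 1 ≤ n) (hm : 1 ≤ m)
    (hser : isSER C n m) :
    lamAB C n m = lamBA C n m ↔
      C.image (fun p => ((n : ℤ) - 1 - p.1, p.2)) = C := by
  rw [lamAB, lamBA, scanStr_eq_iff]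
  constructor
  · intro h
    apply Finset.Subset.antisymm
    · intro q hq
      simp only [Finset.mem_image] at hq
      obtain ⟨⟨a, b⟩, hp, rfl⟩ := hq
      obtain ⟨hx0, hx1, hy0, hy1⟩ := hser.1 _ hp
      simp only at hx0 hx1 hy0 hy1
      obtain ⟨x, rfl⟩ := Int.eq_ofNat_of_zero_le hx0
      obtain ⟨y, rfl⟩ := Int.eq_ofNat_of_zero_le hy0
      have hxn : x < n := by omega
      have hym : y < m := by omega
      exact (h y hym x hxn).mp hp
    · intro p hp
      obtain ⟨a, b⟩ := p
      obtain ⟨hx0, hx1, hy0, hy1⟩ := hser.1 _ hp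
      simp only at hx0 hx1 hy0 hy1
      obtain ⟨x, rfl⟩ := Int.eq_ofNat_of_zero_le hx0
      obtain ⟨y, rfl⟩ := Int.eq_ofNat_of_zero_le hy0
      have hxn : x < n := by omega
      have hym : y < m := by omega
      simp only [Finset.mem_image]
      exact ⟨((n : ℤ) - 1 - x, (y : ℤ)), (h y hym x hxn).mp hp, by simp⟩
  · intro h y hy x hx
    constructor
    · intro hp
      have : ((n : ℤ) - 1 - x, (y : ℤ)) ∈
          C.image (fun p => ((n : ℤ) - 1 - p.1, p.2)) :=
        Finset.mem_image.mpr ⟨_, hp, rfl⟩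
      rwa [h] at this
    · intro hp
      have : ((n : ℤ) - 1 - ((n : ℤ) - 1 - x), (y : ℤ)) ∈
          C.image (fun p => ((n : ℤ) - 1 - p.1, p.2)) :=
        Finset.mem_image.mpr ⟨_, hp, rfl⟩
      rw [h] at this
      simpa using this
end

section
/- Let C be a configuration whose smallest enclosing rectangle R is the square with corners A = (0,0), B = (n−1,0), C = (n−1,n−1), D = (0,n−1) after translation, n ≥ 2. Then the following are equivalent: (1) among the eight associated strings λ_AB, λ_BA, λ_CD, λ_DC, λ_BC, λ_CB, λ_AD, λ_DA there is a unique lexicographically largest one (C is asymmetric); (2) no nontrivial element of the dihedral group of order 8 of symmetries of the square R (the rotations by 90°, 180°, 270° about its centre and the four reflections across its horizontal, vertical and two diagonal bisectors) maps C onto C. -/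
namespace SqAsym

abbrev G8 := Bool × Bool × Bool

def gone : G8 := (false, false, false)

def gmul (e f : G8) : G8 :=
  (xor e.1 f.1, xor e.2.1 (if e.1 then f.2.2 else f.2.1),
   xor e.2.2 (if e.1 then f.2.1 else f.2.2))

def ginv (e : G8) : G8 :=
  (e.1, if e.1 then e.2.2 else e.2.1, if e.1 then e.2.1 else e.2.2)

def tmap (r : ℤ) (e : G8) (p : ℤ × ℤ) : ℤ × ℤ :=
  ((if e.2.1 then r - (if e.1 then p.2 else p.1) else (if e.1 then p.2 else p.1)),
   (if e.2.2 then r - (if e.1 then p.1 else p.2) else (if e.1 then p.1 else p.2)))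

lemma tmap_comp (r : ℤ) (e f : G8) (p : ℤ × ℤ) :
    tmap r e (tmap r f p) = tmap r (gmul e f) p := by
  obtain ⟨se, ae, be⟩ := e; obtain ⟨sf, af, bf⟩ := f
  cases se <;> cases sf <;> cases ae <;> cases af <;> cases be <;> cases bf <;>
    simp [tmap, gmul] <;> omega

lemma tmap_gone (r : ℤ) (p : ℤ × ℤ) : tmap r gone p = p := rfl

lemma gmul_inv_self : ∀ e : G8, gmul (ginv e) e = gone := by decide
lemma gmul_self_inv : ∀ e : G8, gmul e (ginv e) = gone := by decide
lemma gmul_cancel : ∀ e g : G8, gmul e g = e → g = gone := by decide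

def esL : List G8 :=
  [(false,false,false),(false,true,false),(false,true,true),(false,false,true),
   (true,false,true),(true,true,true),(true,false,false),(true,true,false)]

def esN (k : ℕ) : G8 := esL.getD k gone

lemma esN_surj : ∀ h : G8, ∃ j, j < 8 ∧ esN j = h := by decide
lemma gmul_inv_ne : ∀ j < 8, ∀ k < 8, j ≠ k → gmul (ginv (esN k)) (esN j) ≠ gone := by decide

lemma mem_image_tmap (r : ℤ) (e : G8) (C : Finset (ℤ × ℤ)) (q : ℤ × ℤ) :
    q ∈ C.image (tmap r e) ↔ tmap r (ginv e) q ∈ C := by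
  simp only [Finset.mem_image]
  constructor
  · rintro ⟨a, ha, rfl⟩
    rwa [tmap_comp, gmul_inv_self, tmap_gone]
  · intro h
    exact ⟨_, h, by rw [tmap_comp, gmul_self_inv, tmap_gone]⟩

lemma flatMap_congr {l : List ℕ} {F G' : ℕ → List Bool} (h : ∀ i ∈ l, F i = G' i) :
    l.flatMap F = l.flatMap G' := by
  induction l with
  | nil => rfl
  | cons a t ih =>
    simp only [List.flatMap_cons]
    rw [h a List.mem_cons_self, ih (fun i hi => h i (List.mem_cons_of_mem _ hi))]

lemma scanStr_congr {C D : Finset (ℤ × ℤ)} {M N : ℕ} {f g : ℕ → ℕ → ℤ × ℤ}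
    (h : ∀ i < M, ∀ j < N, (f i j ∈ C ↔ g i j ∈ D)) :
    scanStr C M N f = scanStr D M N g := by
  unfold scanStr
  refine flatMap_congr fun i hi => ?_
  refine List.map_congr_left fun j hj => ?_
  rw [List.mem_range] at hi hj
  exact decide_eq_decide.mpr (h i hi j hj)

lemma scanStr_succ (C : Finset (ℤ × ℤ)) (M N : ℕ) (f : ℕ → ℕ → ℤ × ℤ) :
    scanStr C (M+1) N f
      = scanStr C M N f ++ (List.range N).map (fun j => decide (f M j ∈ C)) := by
  unfold scanStr
  rw [List.range_succ, List.flatMap_append]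
  simp

lemma scanStr_length (C : Finset (ℤ × ℤ)) (M N : ℕ) (f : ℕ → ℕ → ℤ × ℤ) :
    (scanStr C M N f).length = M * N := by
  induction M with
  | zero => simp [scanStr]
  | succ m ih =>
    rw [scanStr_succ, List.length_append, ih, List.length_map, List.length_range]
    ring

lemma scanStr_inj {C D : Finset (ℤ × ℤ)} {N : ℕ} {f g : ℕ → ℕ → ℤ × ℤ} :
    ∀ {M : ℕ}, scanStr C M N f = scanStr D M N g →
      ∀ i < M, ∀ j < N, ((f i j ∈ C) ↔ (g i j ∈ D))
  | 0, _, i, hi => by omega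
  | (m+1), h, i, hi => by
    rw [scanStr_succ, scanStr_succ] at h
    obtain ⟨h1, h2⟩ := List.append_inj h (by rw [scanStr_length, scanStr_length])
    intro j hj
    rcases Nat.lt_succ_iff_lt_or_eq.mp hi with hi' | rfl
    · exact scanStr_inj h1 i hi' j hj
    · have := congrArg (fun l => l[j]?) h2
      simp only [List.getElem?_map, List.getElem?_range, hj, Option.map_some] at this
      exact decide_eq_decide.mp (Option.some.inj this)


lemma lamAB_inj {D D' : Finset (ℤ × ℤ)} {n : ℕ}
    (hD : ∀ p ∈ D, 0 ≤ p.1 ∧ p.1 ≤ (n:ℤ)-1 ∧ 0 ≤ p.2 ∧ p.2 ≤ (n:ℤ)-1)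
    (hD' : ∀ p ∈ D', 0 ≤ p.1 ∧ p.1 ≤ (n:ℤ)-1 ∧ 0 ≤ p.2 ∧ p.2 ≤ (n:ℤ)-1)
    (h : lamAB D n n = lamAB D' n n) : D = D' := by
  have key := scanStr_inj (C := D) (D := D') (N := n)
    (f := fun y x => ((x:ℤ),(y:ℤ))) (g := fun y x => ((x:ℤ),(y:ℤ))) (M := n) h
  ext ⟨x, y⟩
  by_cases hx : 0 ≤ x ∧ x ≤ (n:ℤ)-1 ∧ 0 ≤ y ∧ y ≤ (n:ℤ)-1
  · obtain ⟨hx0, hx1, hy0, hy1⟩ := hx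
    have hi : y.toNat < n := by omega
    have hj : x.toNat < n := by omega
    have hpt : ((x.toNat : ℤ), (y.toNat : ℤ)) = (x, y) := by
      simp [Int.toNat_of_nonneg hx0, Int.toNat_of_nonneg hy0]
    have := key y.toNat hi x.toNat hj
    simpa only [hpt] using this
  · constructor
    · intro hm; exact absurd (hD _ hm) hx
    · intro hm; exact absurd (hD' _ hm) hx

def strS (C : Finset (ℤ × ℤ)) (n : ℕ) (e : G8) : List Bool :=
  lamAB (C.image (tmap ((n:ℤ)-1) e)) n n

lemma strS_eq_scan (C : Finset (ℤ × ℤ)) (n : ℕ) (e : G8) :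
    strS C n e = scanStr C n n (fun i j => tmap ((n:ℤ)-1) (ginv e) ((j:ℤ),(i:ℤ))) :=
  scanStr_congr fun i _ j _ => mem_image_tmap _ _ _ _

lemma strings8_eq (C : Finset (ℤ × ℤ)) (n : ℕ) :
    strings8 C n n = esL.map (strS C n) := by
  simp only [strings8, esL, List.map_cons, List.map_nil, strS_eq_scan]
  rfl

end SqAsym

open SqAsym in
/-- Let `C` be a configuration whose smallest enclosing
rectangle `R` is the square with corners `A = (0,0)`, `B = (n-1,0)`,
`C = (n-1,n-1)`, `D = (0,n-1)` after translation, `n ≥ 2`.  Then the following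
are equivalent: (1) among the eight associated strings `λ_AB`, `λ_BA`, `λ_CD`,
`λ_DC`, `λ_BC`, `λ_CB`, `λ_AD`, `λ_DA` there is a unique lexicographically
largest one (`C` is asymmetric); (2) no nontrivial element of the dihedral
group of order 8 of symmetries of the square `R` (the rotations by `90°`,
`180°`, `270°` about its centre and the four reflections across its horizontal,
vertical and two diagonal bisectors) maps `C` onto `C`. -/
theorem square_asymmetric_iff_no_nontrivial_dihedral_symmetry
    (C : Finset (ℤ × ℤ)) (n : ℕ) (hn : 2 ≤ n)
    (hser : isSER C n n) :
    (∃ i, uniqueMaxAt (strings8 C n n) i) ↔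
      (C.image (fun p => ((n : ℤ) - 1 - p.2, p.1)) ≠ C ∧          -- rotation 90°
       C.image (fun p => ((n : ℤ) - 1 - p.1, (n : ℤ) - 1 - p.2)) ≠ C ∧  -- rotation 180°
       C.image (fun p => (p.2, (n : ℤ) - 1 - p.1)) ≠ C ∧          -- rotation 270°
       C.image (fun p => (p.1, (n : ℤ) - 1 - p.2)) ≠ C ∧          -- horizontal bisector
       C.image (fun p => ((n : ℤ) - 1 - p.1, p.2)) ≠ C ∧          -- vertical bisector
       C.image (fun p => (p.2, p.1)) ≠ C ∧                        -- diagonal y = x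
       C.image (fun p => ((n : ℤ) - 1 - p.2, (n : ℤ) - 1 - p.1)) ≠ C) := by  -- antidiagonal
  have hsub : ∀ e : G8, ∀ p ∈ C.image (tmap ((n:ℤ)-1) e),
      0 ≤ p.1 ∧ p.1 ≤ (n:ℤ)-1 ∧ 0 ≤ p.2 ∧ p.2 ≤ (n:ℤ)-1 := by
    rintro ⟨se, ae, be⟩ p hp
    rw [Finset.mem_image] at hp
    obtain ⟨a, ha, rfl⟩ := hp
    obtain ⟨ha1, ha2, ha3, ha4⟩ := hser.1 a ha
    cases se <;> cases ae <;> cases be <;> simp [tmap] <;> omega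
  have hgetD : ∀ k, k < 8 → ((esL.map (strS C n)).getD k [] = strS C n (esN k)) := by
    intro k hk; interval_cases k <;> rfl
  rw [strings8_eq]
  constructor
  · rintro ⟨i, hi8, hmax⟩
    have hi8' : i < 8 := hi8
    have key : ∀ g : G8, g ≠ gone → C.image (tmap ((n:ℤ)-1) g) ≠ C := by
      intro g hg hEq
      obtain ⟨j, hj8, hje⟩ := esN_surj (gmul (esN i) g)
      have hji : j ≠ i := by
        intro hji; subst hji
        exact hg (gmul_cancel _ _ hje.symm)
      have himg : C.image (tmap ((n:ℤ)-1) (gmul (esN i) g))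
          = C.image (tmap ((n:ℤ)-1) (esN i)) := by
        have hfun : tmap ((n:ℤ)-1) (esN i) ∘ tmap ((n:ℤ)-1) g
            = tmap ((n:ℤ)-1) (gmul (esN i) g) := funext (tmap_comp _ _ _)
        rw [← hfun, ← Finset.image_image, hEq]
      have hS : strS C n (esN j) = strS C n (esN i) := by
        simp only [strS]
        rw [hje, himg]
      have hlt := hmax j hj8 hji
      rw [hgetD j hj8, hgetD i hi8', hS] at hlt
      exact lt_irrefl _ (show strS C n (esN i) < strS C n (esN i) from hlt)
    exact ⟨key (true,true,false) (by decide), key (false,true,true) (by decide),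
      key (true,false,true) (by decide), key (false,false,true) (by decide),
      key (false,true,false) (by decide), key (true,false,false) (by decide),
      key (true,true,true) (by decide)⟩
  · rintro ⟨h90, h180, h270, hH, hV, hD, hA⟩
    have allg : ∀ g : G8, g ≠ gone → C.image (tmap ((n:ℤ)-1) g) ≠ C := by
      rintro ⟨s, a, b⟩ hg
      cases s <;> cases a <;> cases b
      · exact absurd rfl hg
      · exact hH
      · exact hV
      · exact h180
      · exact hD
      · exact h270
      · exact h90
      · exact hA
    have hinj : ∀ j, j < 8 → ∀ k, k < 8 → j ≠ k →
        strS C n (esN j) ≠ strS C n (esN k) := by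
      intro j hj k hk hjk hS
      have him : C.image (tmap ((n:ℤ)-1) (esN j)) = C.image (tmap ((n:ℤ)-1) (esN k)) :=
        lamAB_inj (hsub _) (hsub _) hS
      have h2 := congrArg (Finset.image (tmap ((n:ℤ)-1) (ginv (esN k)))) him
      rw [Finset.image_image, Finset.image_image,
        show tmap ((n:ℤ)-1) (ginv (esN k)) ∘ tmap ((n:ℤ)-1) (esN j)
          = tmap ((n:ℤ)-1) (gmul (ginv (esN k)) (esN j)) from funext (tmap_comp _ _ _),
        show tmap ((n:ℤ)-1) (ginv (esN k)) ∘ tmap ((n:ℤ)-1) (esN k)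
          = tmap ((n:ℤ)-1) (gmul (ginv (esN k)) (esN k)) from funext (tmap_comp _ _ _),
        gmul_inv_self,
        show tmap ((n:ℤ)-1) gone = id from funext (tmap_gone _), Finset.image_id] at h2
      exact allg _ (gmul_inv_ne j hj k hk hjk) h2
    obtain ⟨i, hi, hmax⟩ := Finset.exists_max_image (Finset.range 8)
      (fun k => (esL.map (strS C n)).getD k []) ⟨0, by simp⟩
    rw [Finset.mem_range] at hi
    refine ⟨i, hi, ?_⟩
    intro j hj hne
    have hj8 : j < 8 := hj
    have hle := hmax j (Finset.mem_range.mpr hj8)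
    have hneq : (esL.map (strS C n)).getD j [] ≠ (esL.map (strS C n)).getD i [] := by
      rw [hgetD j hj8, hgetD i hi]
      exact hinj j hj8 i hi hne
    exact lt_of_le_of_ne hle hneq
end
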